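/- Let F be a continuous strictly increasing CDF on [c_low, c_high] with c_low > 0, and for each n let c_n ∈ (c_low, c_high] satisfy c_n · n F(c_n) = Σ_l v^l μ^l (1 - (1 - q^l F(c_n))^n) + v_a (1 - (1 - q_a F(c_n))^n), where the right-hand side is bounded by Σ_l v^l + v_a < ∞. Then c_n → c_low as n → ∞. -/
import Mathlib


/-- The equilibrium thresholds c_n of the private program converge to the lowest
cost c_low as the number of agents n tends to infinity. -/
theorem stmt_16 (clow chigh : ℝ) (hclow : 0 < clow) (hlt : clow < chigh)
    (F : ℝ → ℝ) (hFcont : ContinuousOn F (Set.Icc clow chigh))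
    (hFmono : StrictMonoOn F (Set.Icc clow chigh))
    (hFrange : ∀ x ∈ Set.Icc clow chigh, F x ∈ Set.Icc (0 : ℝ) 1)
    (hF0 : F clow = 0) (hF1 : F chigh = 1)
    (L : ℕ) (v μ q : Fin L → ℝ) (va qa : ℝ)
    (hv : ∀ l, 0 ≤ v l) (hva : 0 ≤ va)
    (hμ : ∀ l, μ l ∈ Set.Ioc (0 : ℝ) 1)
    (hq : ∀ l, q l ∈ Set.Ioc (0 : ℝ) 1) (hqa : qa ∈ Set.Ioc (0 : ℝ) 1)
    (c : ℕ → ℝ)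
    (hmem : ∀ n : ℕ, c n ∈ Set.Ioc clow chigh)
    (heq : ∀ n : ℕ, c n * ((n : ℝ) * F (c n)) =
        ∑ l, v l * μ l * (1 - (1 - q l * F (c n)) ^ n) +
          va * (1 - (1 - qa * F (c n)) ^ n)) :
    Filter.Tendsto c Filter.atTop (nhds clow) := by
  set B := (∑ l, v l * μ l) + va with hB
  have hFcn : ∀ n, F (c n) ∈ Set.Icc (0:ℝ) 1 := fun n =>
    hFrange _ ⟨(hmem n).1.le, (hmem n).2⟩
  have hbound : ∀ n : ℕ, (n : ℝ) * F (c n) ≤ B / clow := by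
    intro n
    have hnF : 0 ≤ (n : ℝ) * F (c n) :=
      mul_nonneg (Nat.cast_nonneg n) (hFcn n).1
    have h1 : c n * ((n : ℝ) * F (c n)) ≤ B := by
      rw [heq n, hB]
      apply add_le_add
      · apply Finset.sum_le_sum
        intro l _
        have hx : 0 ≤ 1 - q l * F (c n) := by
          have : q l * F (c n) ≤ 1 :=
            mul_le_one₀ (hq l).2 (hFcn n).1 (hFcn n).2
          linarith
        have hxn : 0 ≤ (1 - q l * F (c n)) ^ n := pow_nonneg hx n
        have hvμ : 0 ≤ v l * μ l := mul_nonneg (hv l) (hμ l).1.le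
        nlinarith
      · have hx : 0 ≤ 1 - qa * F (c n) := by
          have : qa * F (c n) ≤ 1 :=
            mul_le_one₀ hqa.2 (hFcn n).1 (hFcn n).2
          linarith
        have hxn : 0 ≤ (1 - qa * F (c n)) ^ n := pow_nonneg hx n
        nlinarith
    have h2 : clow * ((n : ℝ) * F (c n)) ≤ B :=
      le_trans (mul_le_mul_of_nonneg_right (hmem n).1.le hnF) h1
    rw [le_div_iff₀ hclow]
    linarith
  rw [Metric.tendsto_atTop]
  intro ε hε
  set c' := min (clow + ε) chigh with hc'
  have hc'1 : clow < c' := lt_min (by linarith) hlt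
  have hc'2 : c' ≤ chigh := min_le_right _ _
  have hFc' : 0 < F c' := by
    have := hFmono ⟨le_refl clow, hlt.le⟩ ⟨hc'1.le, hc'2⟩ hc'1
    rwa [hF0] at this
  obtain ⟨N, hN⟩ := exists_nat_gt (B / clow / F c')
  refine ⟨N, fun n hn => ?_⟩
  have hcn : c n < c' := by
    by_contra h
    push_neg at h
    have hFle : F c' ≤ F (c n) :=
      hFmono.monotoneOn ⟨hc'1.le, hc'2⟩ ⟨(hmem n).1.le, (hmem n).2⟩ h
    have hNn : (N : ℝ) ≤ n := Nat.cast_le.2 hn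
    have hBlt : B / clow < (N : ℝ) * F c' := by
      rw [div_lt_iff₀ hFc'] at hN
      linarith
    have : (N : ℝ) * F c' ≤ (n : ℝ) * F (c n) := by
      have h1 : (N : ℝ) * F c' ≤ (n : ℝ) * F c' :=
        mul_le_mul_of_nonneg_right hNn hFc'.le
      have h2 : (n : ℝ) * F c' ≤ (n : ℝ) * F (c n) :=
        mul_le_mul_of_nonneg_left hFle (Nat.cast_nonneg n)
      linarith
    linarith [hbound n]
  rw [Real.dist_eq, abs_lt]
  have := (hmem n).1
  have : c' ≤ clow + ε := min_le_left _ _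
  constructor <;> linarith [(hmem n).1]
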